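/- For the 10-to-1 magic state distillation protocol with the [[10,1,2]] code, if the seven input |T⟩ states each have independent Z-error probability p and the input |CCZ⟩ state has the symmetric Z-error distribution with total error probability p (each of the 7 nontrivial Z^b errors occurring with probability p/7), then the probability of a trivial syndrome satisfies p_s = 1 − 8p + 29p² + O(p³). -/

import Mathlib

/-!
The `[[10,1,2]]` code obtained by morphing the 15-qubit Reed–Muller code.
Its ten qubits are the seven "simplex" qubits, indexed by nonzero vectors
`v ∈ F₂³` (each holding a noisy `|T⟩` state), together with three "edge" qubits
`1̄,2̄,3̄` (holding a noisy `|CCZ⟩` state).  Its three X-stabilizer generators are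
`X` on `{v : v i = 1} ∪ {ī}` for `i = 1,2,3`.  A Z-error pattern consists of
`e : V3 → Bool` (Z errors on the `|T⟩` inputs) and `b : Fin 3 → ZMod 2`
(the error `Z^b` on the `|CCZ⟩` input).  The syndrome is trivial iff the total
Z-error commutes with all X-stabilizers.
-/

/-- Simplex qubit labels: nonzero vectors of `F₂³`. -/
abbrev V3 := {v : Fin 3 → ZMod 2 // v ≠ 0}

/-- Probability of the Z-error pattern `e` on the seven independent `|T⟩` states,
each with Z-error probability `p`. -/
noncomputable def pT (p : ℝ) (e : V3 → Bool) : ℝ :=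
  ∏ v : V3, if e v then p else 1 - p

/-- Probability of the error `Z^b` on the `|CCZ⟩` state: no error with
probability `1 - p`, each of the seven nontrivial `Z^b` with probability `p/7`. -/
noncomputable def pCCZ (p : ℝ) (b : Fin 3 → ZMod 2) : ℝ :=
  if b = 0 then 1 - p else p / 7

/-- The syndrome of the Z-error `(e, b)` is trivial: for each of the three
X-stabilizer generators (`X` on `{v : v i = 1} ∪ {ī}`), the overlap with the
Z-error is even. -/
def syndromeTrivial (e : V3 → Bool) (b : Fin 3 → ZMod 2) : Prop :=
  ∀ i : Fin 3, (∑ v : V3, if v.1 i = 1 ∧ e v then (1 : ZMod 2) else 0) = b i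

instance (e : V3 → Bool) (b : Fin 3 → ZMod 2) : Decidable (syndromeTrivial e b) := by
  unfold syndromeTrivial; infer_instance

/-- The probability that the 10-to-1 protocol succeeds (trivial syndrome). -/
noncomputable def pSucc (p : ℝ) : ℝ :=
  ∑ e : V3 → Bool, ∑ b : Fin 3 → ZMod 2,
    if syndromeTrivial e b then pT p e * pCCZ p b else 0

noncomputable def χ : ZMod 2 → ℝ := fun a => if a = 0 then 1 else -1

def dot (x v : Fin 3 → ZMod 2) : ZMod 2 := ∑ i, x i * v i

def Syn (e : V3 → Bool) : Fin 3 → ZMod 2 :=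
  fun i => ∑ v : V3, if v.1 i = 1 ∧ e v then 1 else 0

lemma χ_zero : χ 0 = 1 := rfl

lemma χ_add (a b : ZMod 2) : χ (a + b) = χ a * χ b := by
  rcases (by decide : ∀ a : ZMod 2, a = 0 ∨ a = 1) a with rfl | rfl <;> rcases (by decide : ∀ a : ZMod 2, a = 0 ∨ a = 1) b with rfl | rfl <;> simp only [χ, show ((1:ZMod 2)+1)=0 from rfl] <;>
    norm_num [show ((1:ZMod 2)+1)=0 from rfl, show (2:ZMod 2)=0 from rfl]

lemma χ_one_add (d : ZMod 2) : χ (d + 1) = -χ d := by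
  rcases (by decide : ∀ a : ZMod 2, a = 0 ∨ a = 1) d with rfl | rfl <;> simp only [χ, show ((1:ZMod 2)+1)=0 from rfl] <;> norm_num [show ((1:ZMod 2)+1)=0 from rfl, show (2:ZMod 2)=0 from rfl]

lemma χ_sum {α : Type*} (s : Finset α) (f : α → ZMod 2) :
    χ (∑ v ∈ s, f v) = ∏ v ∈ s, χ (f v) := by
  induction s using Finset.cons_induction with
  | empty => simp [χ_zero]
  | cons a s ha ih => simp [Finset.sum_cons, Finset.prod_cons, χ_add, ih]

lemma card_x : Fintype.card (Fin 3 → ZMod 2) = 8 := by decide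

lemma orth (b : Fin 3 → ZMod 2) :
    ∑ x : Fin 3 → ZMod 2, χ (dot x b) = if b = 0 then 8 else 0 := by
  by_cases hb : b = 0
  · simp [hb, dot, χ_zero, Finset.sum_const, card_x]
  · simp only [hb, if_false]
    obtain ⟨i, hi⟩ : ∃ i, b i ≠ 0 := by
      by_contra h; push_neg at h; exact hb (funext h)
    have hbi : b i = 1 := (by decide : ∀ a : ZMod 2, a ≠ 0 → a = 1) _ hi
    set δ : Fin 3 → ZMod 2 := fun j => if j = i then 1 else 0 with hδ
    have hdot : ∀ x, dot (x + δ) b = dot x b + 1 := by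
      intro x
      simp only [dot, Pi.add_apply, add_mul, Finset.sum_add_distrib]
      congr 1
      rw [show (1 : ZMod 2) = δ i * b i by simp [hδ, hbi]]
      exact Finset.sum_eq_single_of_mem i (Finset.mem_univ i)
        (fun j _ hj => by simp [hδ, hj])
    have h2 : ∑ x : Fin 3 → ZMod 2, χ (dot x b)
        = ∑ x : Fin 3 → ZMod 2, χ (dot (x + δ) b) :=
      (Fintype.sum_equiv (Equiv.addRight δ) _ _ (fun x => rfl)).symm
    have h3 : ∑ x : Fin 3 → ZMod 2, χ (dot (x + δ) b)
        = -∑ x : Fin 3 → ZMod 2, χ (dot x b) := by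
      simp [hdot, χ_one_add]
    linarith [h2, h3]

lemma sum_pi_bool (w : V3 → Bool → ℝ) :
    ∑ e : V3 → Bool, ∏ v : V3, w v (e v) = ∏ v : V3, (w v true + w v false) := by
  classical
  have h := Finset.prod_univ_sum (t := fun _ : V3 => (Finset.univ : Finset Bool))
    (f := fun v b => w v b)
  rw [Fintype.piFinset_univ] at h
  rw [← h]
  exact Finset.prod_congr rfl fun v _ => by simp

lemma pT_sum (p : ℝ) : ∑ e : V3 → Bool, pT p e = 1 := by
  unfold pT
  rw [sum_pi_bool (w := fun v b => if b then p else 1 - p)]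
  simp

lemma dot_Syn (x : Fin 3 → ZMod 2) (e : V3 → Bool) :
    dot x (Syn e) = ∑ v : V3, if e v then dot x v.1 else 0 := by
  unfold dot Syn
  simp only [Finset.mul_sum]
  rw [Finset.sum_comm]
  refine Finset.sum_congr rfl fun v _ => ?_
  by_cases he : e v
  · simp only [he, and_true, if_true]
    refine Finset.sum_congr rfl fun i _ => ?_
    rw [show (if v.1 i = 1 then (1 : ZMod 2) else 0) = v.1 i from
      (by decide : ∀ a : ZMod 2, (if a = 1 then (1:ZMod 2) else 0) = a) _]
  · simp [he]

lemma char_sum (p : ℝ) (x : Fin 3 → ZMod 2) :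
    ∑ e : V3 → Bool, pT p e * χ (dot x (Syn e))
      = ∏ v : V3, ((1 - p) + p * χ (dot x v.1)) := by
  have key : ∀ e : V3 → Bool, pT p e * χ (dot x (Syn e))
      = ∏ v : V3, (if e v then p * χ (dot x v.1) else (1 - p)) := by
    intro e
    rw [dot_Syn, χ_sum, pT, ← Finset.prod_mul_distrib]
    refine Finset.prod_congr rfl fun v _ => ?_
    by_cases he : e v <;> simp [he, χ_zero]
  simp only [key]
  rw [sum_pi_bool (w := fun v b => if b then p * χ (dot x v.1) else (1 - p))]
  exact Finset.prod_congr rfl fun v _ => by simp [add_comm]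

lemma card4 : ∀ x : Fin 3 → ZMod 2, x ≠ 0 →
    (Finset.univ.filter (fun v : V3 => dot x v.1 = 1)).card = 4 := by decide

lemma prod_eval (p : ℝ) (x : Fin 3 → ZMod 2) (hx : x ≠ 0) :
    ∏ v : V3, ((1 - p) + p * χ (dot x v.1)) = (1 - 2*p)^4 := by
  have h1 : ∀ v : V3, (1 - p) + p * χ (dot x v.1)
      = if dot x v.1 = 1 then (1 - 2*p) else 1 := by
    intro v
    rcases (by decide : ∀ a : ZMod 2, a = 0 ∨ a = 1) (dot x v.1) with h | h <;>
      rw [h] <;> simp [χ] <;> ring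
  rw [Finset.prod_congr rfl fun v _ => h1 v, Finset.prod_ite, Finset.prod_const,
    Finset.prod_const, one_pow, mul_one, card4 x hx]

lemma pCCZ_eq (p : ℝ) (b : Fin 3 → ZMod 2) :
    pCCZ p b = p/7 + (1 - 8*p/7)/8 * ∑ x : Fin 3 → ZMod 2, χ (dot x b) := by
  rw [orth, pCCZ]
  by_cases hb : b = 0 <;> simp [hb] <;> ring

lemma pSucc_eq (p : ℝ) : pSucc p = ∑ e : V3 → Bool, pT p e * pCCZ p (Syn e) := by
  unfold pSucc
  refine Finset.sum_congr rfl fun e _ => ?_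
  have h : ∀ b, syndromeTrivial e b ↔ b = Syn e := by
    intro b
    unfold syndromeTrivial Syn
    constructor
    · intro h; funext i; exact (h i).symm
    · intro h i; rw [h]
  calc ∑ b : Fin 3 → ZMod 2, (if syndromeTrivial e b then pT p e * pCCZ p b else 0)
      = ∑ b : Fin 3 → ZMod 2, (if b = Syn e then pT p e * pCCZ p b else 0) :=
        Finset.sum_congr rfl fun b _ => if_congr (h b) rfl rfl
    _ = pT p e * pCCZ p (Syn e) := by
        rw [Finset.sum_ite_eq' Finset.univ (Syn e) (fun b => pT p e * pCCZ p b)]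
        simp

lemma pSucc_closed (p : ℝ) :
    pSucc p = p/7 + (1 - 8*p/7)/8 * (1 + 7*(1-2*p)^4) := by
  rw [pSucc_eq]
  simp only [pCCZ_eq, mul_add]
  rw [Finset.sum_add_distrib]
  have h1 : ∑ e : V3 → Bool, pT p e * (p/7) = p/7 := by
    rw [← Finset.sum_mul, pT_sum, one_mul]
  have h2 : ∑ e : V3 → Bool, pT p e * ((1 - 8*p/7)/8 * ∑ x : Fin 3 → ZMod 2, χ (dot x (Syn e)))
      = (1 - 8*p/7)/8 * (1 + 7*(1-2*p)^4) := by
    have hsw : ∑ e : V3 → Bool, pT p e * ((1 - 8*p/7)/8 * ∑ x : Fin 3 → ZMod 2, χ (dot x (Syn e)))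
        = (1 - 8*p/7)/8 * ∑ x : Fin 3 → ZMod 2, ∑ e : V3 → Bool, pT p e * χ (dot x (Syn e)) := by
      calc ∑ e : V3 → Bool, pT p e * ((1 - 8*p/7)/8 * ∑ x : Fin 3 → ZMod 2, χ (dot x (Syn e)))
          = ∑ e : V3 → Bool, ∑ x : Fin 3 → ZMod 2,
              (1 - 8*p/7)/8 * (pT p e * χ (dot x (Syn e))) := by
            refine Finset.sum_congr rfl fun e _ => ?_
            rw [Finset.mul_sum, Finset.mul_sum]
            exact Finset.sum_congr rfl fun x _ => by ring
        _ = ∑ x : Fin 3 → ZMod 2, ∑ e : V3 → Bool,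
              (1 - 8*p/7)/8 * (pT p e * χ (dot x (Syn e))) := Finset.sum_comm
        _ = (1 - 8*p/7)/8 * ∑ x : Fin 3 → ZMod 2, ∑ e : V3 → Bool,
              pT p e * χ (dot x (Syn e)) := by
            rw [Finset.mul_sum]
            exact Finset.sum_congr rfl fun x _ => (Finset.mul_sum _ _ _).symm
    rw [hsw]
    congr 1
    simp only [char_sum]
    rw [← Finset.sum_erase_add _ _ (Finset.mem_univ (0 : Fin 3 → ZMod 2))]
    have h0 : ∏ v : V3, ((1-p) + p * χ (dot (0 : Fin 3 → ZMod 2) v.1)) = 1 := by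
      have : ∀ v : V3, dot (0 : Fin 3 → ZMod 2) v.1 = 0 := by
        intro v; unfold dot; simp
      simp [this, χ_zero]
    rw [Finset.sum_congr rfl (fun x hx => prod_eval p x (Finset.ne_of_mem_erase hx)),
      Finset.sum_const, h0]
    have hc : (Finset.univ.erase (0 : Fin 3 → ZMod 2)).card = 7 := by
      rw [Finset.card_erase_of_mem (Finset.mem_univ _), Finset.card_univ, card_x]
    rw [hc, nsmul_eq_mul]
    push_cast
    ring
  rw [h1, h2]
  ring

/-- For the 10-to-1 magic state distillation protocol with the
`[[10,1,2]]` code, with seven `|T⟩` inputs of independent Z-error probability `p`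
and one `|CCZ⟩` input with symmetric Z-error distribution of total probability
`p`, the probability of a trivial syndrome satisfies
`p_s = 1 − 8p + 29p² + O(p³)`. -/
theorem ten_to_one_success_probability :
    ∃ C : ℝ, 0 < C ∧ ∀ p : ℝ, 0 ≤ p → p ≤ 1 →
      |pSucc p - (1 - 8 * p + 29 * p ^ 2)| ≤ C * p ^ 3 := by
  refine ⟨114, by norm_num, fun p hp0 hp1 => ?_⟩
  have key : pSucc p - (1 - 8 * p + 29 * p ^ 2)
      = p ^ 3 * (-52 + 46 * p - 16 * p ^ 2) := by
    rw [pSucc_closed]; ring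
  rw [key, abs_mul, abs_of_nonneg (by positivity : (0:ℝ) ≤ p ^ 3)]
  have hr : |(-52 + 46 * p - 16 * p ^ 2 : ℝ)| ≤ 114 :=
    abs_le.mpr ⟨by nlinarith, by nlinarith⟩
  calc p ^ 3 * |(-52 + 46 * p - 16 * p ^ 2 : ℝ)|
      ≤ p ^ 3 * 114 := mul_le_mul_of_nonneg_left hr (by positivity)
    _ = 114 * p ^ 3 := by ring
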